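/- Existence of the complexification: let φ : ℂ^n → ℂ be real-analytic at a point p (analytic over ℝ at p, regarding ℂ^n as a real normed space). Then there exists a function Φ : ℂ^n × ℂ^n → ℂ that is complex-analytic at the point (p, conj p) and satisfies Φ(z, conj z) = φ(z) for all z in some neighborhood of p. -/

import Mathlib

/-- Componentwise complex conjugation on `ℂ^n`. -/
def conjVec {n : ℕ} (z : Fin n → ℂ) : Fin n → ℂ := fun i => (starRingEnd ℂ) (z i)

open Complex ContinuousMultilinearMap
open scoped NNReal ENNReal

/-- The basis vectors of `ℂ^n` over `ℝ`: `e_i` and `I • e_i`. -/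
noncomputable def bvec {n : ℕ} (b : Fin n × Bool) : Fin n → ℂ :=
  Pi.single b.1 (if b.2 then Complex.I else 1)

/-- Real coordinates of `u : ℂ^n` in the basis `bvec`. -/
noncomputable def cf {n : ℕ} (b : Fin n × Bool) (u : Fin n → ℂ) : ℝ :=
  if b.2 then (u b.1).im else (u b.1).re

/-- Complexified coordinate functionals on `ℂ^n × ℂ^n`. -/
noncomputable def ell {n : ℕ} (b : Fin n × Bool) :
    ((Fin n → ℂ) × (Fin n → ℂ)) →L[ℂ] ℂ :=
  if b.2 then
    (2 * Complex.I)⁻¹ •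
      (((ContinuousLinearMap.proj b.1).comp
          (ContinuousLinearMap.fst ℂ (Fin n → ℂ) (Fin n → ℂ)))
        - ((ContinuousLinearMap.proj b.1).comp
          (ContinuousLinearMap.snd ℂ (Fin n → ℂ) (Fin n → ℂ))))
  else
    (2 : ℂ)⁻¹ •
      (((ContinuousLinearMap.proj b.1).comp
          (ContinuousLinearMap.fst ℂ (Fin n → ℂ) (Fin n → ℂ)))
        + ((ContinuousLinearMap.proj b.1).comp
          (ContinuousLinearMap.snd ℂ (Fin n → ℂ) (Fin n → ℂ))))

lemma ell_false_apply {n : ℕ} (i : Fin n) (v : (Fin n → ℂ) × (Fin n → ℂ)) :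
    ell (i, false) v = (2 : ℂ)⁻¹ * (v.1 i + v.2 i) := by
  simp [ell]; ring

lemma ell_true_apply {n : ℕ} (i : Fin n) (v : (Fin n → ℂ) × (Fin n → ℂ)) :
    ell (i, true) v = (2 * Complex.I)⁻¹ * (v.1 i - v.2 i) := by
  simp [ell]

lemma ell_diag {n : ℕ} (b : Fin n × Bool) (u : Fin n → ℂ) :
    ell b (u, conjVec u) = ((cf b u : ℝ) : ℂ) := by
  rcases b with ⟨i, ε⟩
  cases ε
  · rw [ell_false_apply]
    simp only [cf, conjVec]
    rw [Complex.add_conj]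
    push_cast
    ring
  · rw [ell_true_apply]
    simp only [cf, conjVec]
    rw [Complex.sub_conj]
    have hI := Complex.I_ne_zero
    field_simp
    push_cast
    ring

lemma ell_norm_le {n : ℕ} (b : Fin n × Bool) (v : (Fin n → ℂ) × (Fin n → ℂ)) :
    ‖ell b v‖ ≤ ‖v‖ := by
  have h1 : ‖v.1 b.1‖ ≤ ‖v‖ :=
    (norm_le_pi_norm v.1 b.1).trans (norm_fst_le v)
  have h2 : ‖v.2 b.1‖ ≤ ‖v‖ :=
    (norm_le_pi_norm v.2 b.1).trans (norm_snd_le v)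
  rcases b with ⟨i, ε⟩
  cases ε
  · rw [ell_false_apply, norm_mul]
    have h3 : ‖((2:ℂ))⁻¹‖ = 2⁻¹ := by simp
    calc ‖(2:ℂ)⁻¹‖ * ‖v.1 i + v.2 i‖ ≤ 2⁻¹ * (‖v‖ + ‖v‖) := by
          rw [h3]
          gcongr
          exact (norm_add_le _ _).trans (by gcongr)
      _ = ‖v‖ := by ring
  · rw [ell_true_apply, norm_mul]
    have h3 : ‖((2 * Complex.I : ℂ))⁻¹‖ = 2⁻¹ := by
      simp [norm_inv]
    calc ‖(2 * Complex.I : ℂ)⁻¹‖ * ‖v.1 i - v.2 i‖ ≤ 2⁻¹ * (‖v‖ + ‖v‖) := by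
          rw [h3]
          gcongr
          exact (norm_sub_le _ _).trans (by gcongr)
      _ = ‖v‖ := by ring

lemma bvec_norm_le {n : ℕ} (b : Fin n × Bool) : ‖bvec b‖ ≤ 1 := by
  rw [pi_norm_le_iff_of_nonneg zero_le_one]
  intro j
  rcases b with ⟨i, ε⟩
  rcases eq_or_ne j i with rfl | hji
  · cases ε <;> simp [bvec]
  · simp [bvec, Pi.single_eq_of_ne hji]

lemma decomp {n : ℕ} (u : Fin n → ℂ) :
    (∑ b : Fin n × Bool, cf b u • bvec b) = u := by
  funext j
  simp only [Finset.sum_apply, Pi.smul_apply, Fintype.sum_prod_type]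
  rw [Finset.sum_eq_single j]
  · simp [bvec, cf, Complex.real_smul]
    linear_combination Complex.re_add_im (u j)
  · intro i _ hij
    simp [bvec, cf, Pi.single_eq_of_ne (Ne.symm hij)]
  · simp

/-- The complexification of a continuous `ℝ`-multilinear map on `(ℂ^n)^k`. -/
noncomputable def Qk {n k : ℕ}
    (p : ContinuousMultilinearMap ℝ (fun _ : Fin k => (Fin n → ℂ)) ℂ) :
    ContinuousMultilinearMap ℂ (fun _ : Fin k => ((Fin n → ℂ) × (Fin n → ℂ))) ℂ :=
  ∑ s : Fin k → Fin n × Bool,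
    (p fun j => bvec (s j)) •
      (ContinuousMultilinearMap.mkPiAlgebra ℂ (Fin k) ℂ).compContinuousLinearMap
        (fun j => ell (s j))

lemma Qk_apply {n k : ℕ}
    (p : ContinuousMultilinearMap ℝ (fun _ : Fin k => (Fin n → ℂ)) ℂ)
    (m : Fin k → (Fin n → ℂ) × (Fin n → ℂ)) :
    Qk p m = ∑ s : Fin k → Fin n × Bool,
      (p fun j => bvec (s j)) * ∏ j, ell (s j) (m j) := by
  simp [Qk, ContinuousMultilinearMap.sum_apply, smul_eq_mul]

lemma Qk_diag {n k : ℕ}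
    (p : ContinuousMultilinearMap ℝ (fun _ : Fin k => (Fin n → ℂ)) ℂ)
    (u : Fin n → ℂ) :
    Qk p (fun _ => (u, conjVec u)) = p (fun _ => u) := by
  rw [Qk_apply]
  conv_rhs => rw [show (fun _ : Fin k => u) = fun _ : Fin k =>
    ∑ b : Fin n × Bool, cf b u • bvec b from funext fun _ => (decomp u).symm]
  rw [p.map_sum (α := fun _ : Fin k => Fin n × Bool) (g := fun _ b => cf b u • bvec b)]
  refine Finset.sum_congr rfl fun s _ => ?_
  rw [p.map_smul_univ]
  simp only [ell_diag]
  rw [Complex.real_smul]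
  push_cast
  ring

lemma Qk_norm_le {n k : ℕ}
    (p : ContinuousMultilinearMap ℝ (fun _ : Fin k => (Fin n → ℂ)) ℂ) :
    ‖Qk p‖ ≤ (2 * n + 1 : ℝ) ^ k * ‖p‖ := by
  refine ContinuousMultilinearMap.opNorm_le_bound ?_ fun m => ?_
  · positivity
  rw [Qk_apply]
  calc ‖∑ s : Fin k → Fin n × Bool,
        (p fun j => bvec (s j)) * ∏ j, ell (s j) (m j)‖
      ≤ ∑ s : Fin k → Fin n × Bool,
        ‖(p fun j => bvec (s j)) * ∏ j, ell (s j) (m j)‖ := norm_sum_le _ _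
    _ ≤ ∑ _s : Fin k → Fin n × Bool, ‖p‖ * ∏ j, ‖m j‖ := by
        refine Finset.sum_le_sum fun s _ => ?_
        rw [norm_mul]
        have h1 : ‖p fun j => bvec (s j)‖ ≤ ‖p‖ := by
          calc ‖p fun j => bvec (s j)‖ ≤ ‖p‖ * ∏ j, ‖bvec (s j)‖ := p.le_opNorm _
            _ ≤ ‖p‖ * 1 := by
                gcongr
                exact Finset.prod_le_one (fun j _ => norm_nonneg _)
                  (fun j _ => bvec_norm_le _)
            _ = ‖p‖ := mul_one _
        have h2 : ‖∏ j, ell (s j) (m j)‖ ≤ ∏ j, ‖m j‖ := by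
          rw [norm_prod]
          exact Finset.prod_le_prod (fun j _ => norm_nonneg _)
            (fun j _ => ell_norm_le _ _)
        exact mul_le_mul h1 h2 (norm_nonneg _) (norm_nonneg _)
    _ = (2 * n : ℝ) ^ k * (‖p‖ * ∏ j, ‖m j‖) := by
        rw [Finset.sum_const, Finset.card_univ, nsmul_eq_mul]
        have hcard : (Fintype.card (Fin k → Fin n × Bool) : ℝ) = (2 * n : ℝ) ^ k := by
          rw [Fintype.card_fun, Fintype.card_prod, Fintype.card_fin,
            Fintype.card_bool, Fintype.card_fin]
          push_cast
          ring
        rw [hcard]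
    _ ≤ (2 * n + 1 : ℝ) ^ k * (‖p‖ * ∏ j, ‖m j‖) := by
        have hnn : (0:ℝ) ≤ ‖p‖ * ∏ j, ‖m j‖ :=
          mul_nonneg (norm_nonneg _) (Finset.prod_nonneg fun j _ => norm_nonneg _)
        have hb : (2 * n : ℝ) ^ k ≤ (2 * n + 1 : ℝ) ^ k :=
          pow_le_pow_left₀ (by positivity) (by linarith) k
        exact mul_le_mul_of_nonneg_right hb hnn
    _ = (2 * n + 1 : ℝ) ^ k * ‖p‖ * ∏ j, ‖m j‖ := by ring

lemma conjVec_norm {n : ℕ} (u : Fin n → ℂ) : ‖conjVec u‖ = ‖u‖ := by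
  simp [conjVec, Pi.norm_def]

lemma conjVec_sub {n : ℕ} (z w : Fin n → ℂ) :
    conjVec z - conjVec w = conjVec (z - w) := by
  funext i
  simp [conjVec, map_sub]

theorem complexification_exists (n : ℕ) (p : Fin n → ℂ) (φ : (Fin n → ℂ) → ℂ)
    (hφ : AnalyticAt ℝ φ p) :
    ∃ Φ : (Fin n → ℂ) × (Fin n → ℂ) → ℂ,
      AnalyticAt ℂ Φ (p, conjVec p) ∧ ∀ᶠ z in nhds p, Φ (z, conjVec z) = φ z := by
  obtain ⟨pf, hpf⟩ := hφ
  obtain ⟨rφ, hrφ⟩ := hpf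
  set Q : FormalMultilinearSeries ℂ ((Fin n → ℂ) × (Fin n → ℂ)) ℂ :=
    fun k => Qk (pf k) with hQdef
  -- radius of Q is positive
  have hrad : 0 < pf.radius := lt_of_lt_of_le hrφ.r_pos hrφ.r_le
  obtain ⟨r0, hr0pos, hr0lt⟩ := ENNReal.lt_iff_exists_nnreal_btwn.1 hrad
  obtain ⟨C, hCpos, hC⟩ := pf.norm_mul_pow_le_of_lt_radius hr0lt
  set M : ℝ≥0 := 2 * (n : ℝ≥0) + 1 with hMdef
  have hM0 : M ≠ 0 := by
    rw [hMdef]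
    positivity
  set s0 : ℝ≥0 := r0 / M with hs0def
  have hr0pos' : 0 < r0 := by exact_mod_cast hr0pos
  have hs0pos : 0 < s0 := div_pos hr0pos' (hM0.bot_lt)
  have hMr : (M : ℝ) = 2 * n + 1 := by
    rw [hMdef]
    push_cast
    ring
  have hQbound : ∀ k, ‖Q k‖ * (s0:ℝ) ^ k ≤ C := by
    intro k
    have h1 : ‖Q k‖ ≤ (2 * n + 1 : ℝ) ^ k * ‖pf k‖ := Qk_norm_le (pf k)
    have h2 : ((M:ℝ)) * (s0:ℝ) = r0 := by
      rw [hs0def, NNReal.coe_div]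
      field_simp
    calc ‖Q k‖ * (s0:ℝ) ^ k ≤ ((2 * n + 1 : ℝ) ^ k * ‖pf k‖) * (s0:ℝ) ^ k := by
          gcongr
      _ = ‖pf k‖ * ((M:ℝ) * (s0:ℝ)) ^ k := by rw [mul_pow, hMr]; ring
      _ = ‖pf k‖ * (r0:ℝ) ^ k := by rw [h2]
      _ ≤ C := hC k
  have hQrad : (s0 : ℝ≥0∞) ≤ Q.radius := Q.le_radius_of_bound C hQbound
  have hQpos : 0 < Q.radius := lt_of_lt_of_le (by exact_mod_cast hs0pos) hQrad
  have hball := Q.hasFPowerSeriesOnBall hQpos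
  refine ⟨fun v => Q.sum (v - (p, conjVec p)), ?_, ?_⟩
  · have h2 : AnalyticAt ℂ
        (fun v : (Fin n → ℂ) × (Fin n → ℂ) => v - (p, conjVec p)) (p, conjVec p) :=
      analyticAt_id.sub analyticAt_const
    have h1 : AnalyticAt ℂ Q.sum
        ((fun v : (Fin n → ℂ) × (Fin n → ℂ) => v - (p, conjVec p)) (p, conjVec p)) := by
      simpa using hball.analyticAt
    exact AnalyticAt.comp (f := fun v => v - (p, conjVec p)) h1 h2
  · have hmin : 0 < min rφ Q.radius := lt_min hrφ.r_pos hQpos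
    filter_upwards [EMetric.ball_mem_nhds p hmin] with z hz
    set u := z - p with hudef
    have hz' : (‖u‖₊ : ℝ≥0∞) < min rφ Q.radius := by
      rw [Metric.mem_eball, edist_eq_enorm_sub, enorm_eq_nnnorm] at hz
      exact hz
    have huφ : u ∈ Metric.eball (0 : Fin n → ℂ) rφ := by
      rw [Metric.mem_eball, edist_zero_right, enorm_eq_nnnorm]
      exact lt_of_lt_of_le hz' (min_le_left _ _)
    have hA : HasSum (fun k => pf k fun _ => u) (φ z) := by
      have := hrφ.hasSum huφ
      simpa [hudef] using this
    have hdiag_norm : ‖((u, conjVec u) : (Fin n → ℂ) × (Fin n → ℂ))‖₊ = ‖u‖₊ := by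
      apply NNReal.coe_injective
      simp only [coe_nnnorm, Prod.norm_def, conjVec_norm, max_self]
    have huQ : ((u, conjVec u) : (Fin n → ℂ) × (Fin n → ℂ)) ∈
        Metric.eball (0 : (Fin n → ℂ) × (Fin n → ℂ)) Q.radius := by
      rw [Metric.mem_eball, edist_zero_right, enorm_eq_nnnorm]
      rw [show (‖((u, conjVec u) : (Fin n → ℂ) × (Fin n → ℂ))‖₊ : ℝ≥0∞) = (‖u‖₊ : ℝ≥0∞) by
        rw [hdiag_norm]]
      exact lt_of_lt_of_le hz' (min_le_right _ _)
    have hB : HasSum (fun k => Q k fun _ => (u, conjVec u)) (Q.sum (u, conjVec u)) :=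
      Q.hasSum huQ
    have hA' : HasSum (fun k => Q k fun _ => (u, conjVec u)) (φ z) := by
      have heq : (fun k => Q k fun _ => (u, conjVec u)) = fun k => pf k fun _ => u := by
        funext k
        exact Qk_diag (pf k) u
      rw [heq]
      exact hA
    have hval : ((z, conjVec z) : (Fin n → ℂ) × (Fin n → ℂ)) - (p, conjVec p)
        = (u, conjVec u) := by
      ext1
      · rfl
      · show conjVec z - conjVec p = conjVec u
        rw [conjVec_sub]
    show Q.sum ((z, conjVec z) - (p, conjVec p)) = φ z
    rw [hval]
    exact hB.unique hA'
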